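/- Let S = (U, F) be a finite set system, G a graph on vertex set U whose closed neighborhoods form F, and ⪯ a total order on U with crossing number k with respect to S. Then the greedy partition of U into maximal compact prefix intervals yields a distance-1 neighborhood cover of G with weak diameter at most 4 and overlap at most k + 1. -/

import Mathlib

variable {V : Type} [Fintype V] [DecidableEq V] [LinearOrder V]

/-- The closed neighborhood `N[v]` of a vertex, as a finset. -/
def cnbhd (G : SimpleGraph V) [DecidableRel G.Adj] (v : V) : Finset V :=
  insert v (G.neighborFinset v)

/-- The crossing number of a set `X` with respect to the linear order on `V`:
the number of pairs `(u, u')` where `u'` is the immediate successor of `u`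
and exactly one of `u, u'` belongs to `X`. -/
def crossNum (X : Finset V) : ℕ :=
  (Finset.univ.filter (fun p : V × V =>
    (p.1 < p.2 ∧ ∀ w : V, p.1 < w → p.2 ≤ w) ∧ Xor (p.1 ∈ X) (p.2 ∈ X))).card

/-- The largest prefix (in the linear order) of a finset `R` that is compact,
i.e. contained in the closed neighborhood of some vertex. -/
def lcp (G : SimpleGraph V) [DecidableRel G.Adj] (R : Finset V) : Finset V :=
  ((R.sort (· ≤ ·)).take (Nat.findGreatest
    (fun m => ∃ u : V, ((R.sort (· ≤ ·)).take m).toFinset ⊆ cnbhd G u) R.card)).toFinset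

/-- The greedy partition: repeatedly take the largest compact prefix of the
remaining elements (fuel-based recursion; each step removes a nonempty prefix). -/
def greedyAux (G : SimpleGraph V) [DecidableRel G.Adj] : ℕ → Finset V → List (Finset V)
  | 0, _ => []
  | fuel + 1, R => if R = ∅ then [] else lcp G R :: greedyAux G fuel (R \ lcp G R)

/-- The neighborhood cover obtained from the greedy partition, consisting of the
clusters `N[I]` for the parts `I` of the greedy partition. -/
def greedyCover (G : SimpleGraph V) [DecidableRel G.Adj] : List (Finset V) :=
  (greedyAux G (Fintype.card V) Finset.univ).map (fun I => I.biUnion (cnbhd G))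

/- ### Auxiliary lemmas -/

lemma mem_cnbhd_self (G : SimpleGraph V) [DecidableRel G.Adj] (v : V) : v ∈ cnbhd G v :=
  Finset.mem_insert_self _ _

lemma mem_cnbhd_comm (G : SimpleGraph V) [DecidableRel G.Adj] {u v : V} :
    u ∈ cnbhd G v ↔ v ∈ cnbhd G u := by
  simp only [cnbhd, Finset.mem_insert, SimpleGraph.mem_neighborFinset]
  constructor
  · rintro (h | h)
    · exact Or.inl h.symm
    · exact Or.inr h.symm
  · rintro (h | h)
    · exact Or.inl h.symm
    · exact Or.inr h.symm

/-- All the structural facts about `lcp` we need. -/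
lemma lcp_facts (G : SimpleGraph V) [DecidableRel G.Adj] (R : Finset V) (hR : R.Nonempty) :
    lcp G R ⊆ R ∧ (lcp G R).Nonempty ∧ (∃ u, lcp G R ⊆ cnbhd G u) ∧
    (∀ x ∈ lcp G R, ∀ y ∈ R, y ∉ lcp G R → x < y) ∧
    (∀ hne : (R \ lcp G R).Nonempty, ∀ u,
      ¬ (insert ((R \ lcp G R).min' hne) (lcp G R) ⊆ cnbhd G u)) := by
  classical
  set l := R.sort (· ≤ ·) with hl
  set P : ℕ → Prop := fun m => ∃ u : V, ((l.take m).toFinset ⊆ cnbhd G u) with hP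
  set m₀ := Nat.findGreatest P R.card with hm₀
  have hlcp : lcp G R = (l.take m₀).toFinset := rfl
  have hlen : l.length = R.card := Finset.length_sort _
  have hmemI : ∀ x, x ∈ l ↔ x ∈ R := fun x => Finset.mem_sort _
  have hsortlt : l.Pairwise (· < ·) := by
    have h1 : l.Pairwise (· ≤ ·) := Finset.pairwise_sort _ _
    have h2 : l.Pairwise (· ≠ ·) := Finset.sort_nodup _ _
    exact (List.pairwise_and_iff.mpr ⟨h1, h2⟩).imp (fun h => lt_of_le_of_ne h.1 h.2)
  -- prefix < rest
  have hpw : ∀ x ∈ l.take m₀, ∀ y ∈ l.drop m₀, x < y := by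
    have := (List.pairwise_append (l₁ := l.take m₀) (l₂ := l.drop m₀)
      (R := (· < ·))).mp (by rw [List.take_append_drop]; exact hsortlt)
    exact this.2.2
  have hsub : lcp G R ⊆ R := by
    intro x hx
    rw [hlcp, List.mem_toFinset] at hx
    exact (hmemI x).mp (List.take_subset _ _ hx)
  have hprefix : ∀ x ∈ lcp G R, ∀ y ∈ R, y ∉ lcp G R → x < y := by
    intro x hx y hyR hy
    rw [hlcp, List.mem_toFinset] at hx hy
    have hyl : y ∈ l := (hmemI y).mpr hyR
    have : y ∈ l.take m₀ ++ l.drop m₀ := by rw [List.take_append_drop]; exact hyl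
    rcases List.mem_append.mp this with h | h
    · exact absurd h hy
    · exact hpw x hx y h
  -- P 1 holds
  have hlne : l ≠ [] := by
    intro h
    have := hlen
    rw [h] at this
    simp at this
    exact hR.ne_empty (Finset.card_eq_zero.mp this.symm)
  have htake1 : l.take 1 = [l.head hlne] := by
    rw [List.take_one, List.head?_eq_head hlne]
    rfl
  have hP1 : P 1 := by
    refine ⟨l.head hlne, ?_⟩
    rw [htake1]
    intro x hx
    simp only [List.toFinset_cons, List.toFinset_nil, LawfulSingleton.insert_empty_eq,
      Finset.mem_singleton] at hx
    rw [hx]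
    exact mem_cnbhd_self G _
  have hcard1 : 1 ≤ R.card := hR.card_pos
  have h1m : 1 ≤ m₀ := Nat.le_findGreatest hcard1 hP1
  have hne : (lcp G R).Nonempty := by
    refine ⟨l.head hlne, ?_⟩
    rw [hlcp, List.mem_toFinset]
    have : [l.head hlne].Sublist (l.take m₀) := by
      rw [← htake1]
      exact (List.take_isPrefix_take.mpr (Or.inl h1m)).sublist
    exact this.subset (List.mem_singleton_self _)
  have hcompact : ∃ u, lcp G R ⊆ cnbhd G u := Nat.findGreatest_spec hcard1 hP1
  refine ⟨hsub, hne, hcompact, hprefix, ?_⟩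
  intro hne' u hins
  -- maximality
  have hm₀lt : m₀ < R.card := by
    rcases lt_or_eq_of_le (Nat.findGreatest_le (P := P) R.card) with h | h
    · exact h
    · exfalso
      have : lcp G R = R := by
        rw [hlcp, ← hm₀] at *
        rw [h, ← hlen, List.take_length]
        rw [hl]
        exact Finset.sort_toFinset _ _
      rcases hne' with ⟨x, hx⟩
      rw [Finset.mem_sdiff, this] at hx
      exact hx.2 hx.1
  have hm₀len : m₀ < l.length := by rw [hlen]; exact hm₀lt
  have hnP : ¬ P (m₀ + 1) :=
    Nat.findGreatest_is_greatest (Nat.lt_succ_self _) hm₀lt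
  -- identify l[m₀] with min' (R \ lcp G R)
  have hdropc : l.drop m₀ = l[m₀] :: l.drop (m₀ + 1) := List.drop_eq_getElem_cons hm₀len
  have hgetdrop : l[m₀] ∈ l.drop m₀ := by rw [hdropc]; exact List.mem_cons_self
  have hgetR : l[m₀] ∈ R := (hmemI _).mp (List.getElem_mem _)
  have hgetnot : l[m₀] ∉ lcp G R := by
    rw [hlcp, List.mem_toFinset]
    intro h
    exact lt_irrefl _ (hpw _ h _ hgetdrop)
  have hgetle : ∀ y ∈ R \ lcp G R, l[m₀] ≤ y := by
    intro y hy
    rw [Finset.mem_sdiff] at hy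
    have hyl : y ∈ l := (hmemI y).mpr hy.1
    have : y ∈ l.take m₀ ++ l.drop m₀ := by rw [List.take_append_drop]; exact hyl
    rcases List.mem_append.mp this with h | h
    · exact absurd ((List.mem_toFinset).mpr h) hy.2
    · rw [hdropc] at h
      rcases List.mem_cons.mp h with h | h
      · exact le_of_eq h.symm
      · have hsubl : (l.drop m₀).Pairwise (· < ·) :=
          List.Pairwise.sublist (List.drop_sublist m₀ l) hsortlt
        rw [hdropc] at hsubl
        exact le_of_lt ((List.pairwise_cons.mp hsubl).1 y h)
  have hmin : (R \ lcp G R).min' hne' = l[m₀] := by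
    apply le_antisymm
    · exact Finset.min'_le _ _ (Finset.mem_sdiff.mpr ⟨hgetR, hgetnot⟩)
    · exact hgetle _ (Finset.min'_mem _ _)
  -- insert min' lcp = toFinset of take (m₀+1)
  have htake : (l.take (m₀ + 1)).toFinset = insert l[m₀] (lcp G R) := by
    rw [List.take_succ, List.getElem?_eq_getElem hm₀len]
    rw [List.toFinset_append]
    simp only [Option.toList_some, List.toFinset_cons, List.toFinset_nil]
    rw [hlcp]
    ext y
    simp only [Finset.mem_union, Finset.mem_insert, Finset.notMem_empty, or_false]
    tauto
  apply hnP
  refine ⟨u, ?_⟩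
  rw [htake, ← hmin]
  exact hins

/-- crossing pairs whose left end lies in `R`. -/
def crossIn (R X : Finset V) : ℕ :=
  (Finset.univ.filter (fun p : V × V =>
    p.1 ∈ R ∧ (p.1 < p.2 ∧ ∀ w : V, p.1 < w → p.2 ≤ w) ∧ Xor (p.1 ∈ X) (p.2 ∈ X))).card

lemma crossIn_univ (X : Finset V) : crossIn Finset.univ X = crossNum X := by
  unfold crossIn crossNum
  congr 1
  apply Finset.filter_congr
  intro p _
  simp

lemma crossIn_mono {R' R : Finset V} (h : R' ⊆ R) (X : Finset V) :
    crossIn R' X ≤ crossIn R X := by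
  apply Finset.card_le_card
  intro p hp
  rw [Finset.mem_filter] at hp ⊢
  exact ⟨hp.1, h hp.2.1, hp.2.2⟩

lemma crossIn_lt {R' R : Finset V} (h : R' ⊆ R) (X : Finset V) {p1 p2 : V}
    (hp1R : p1 ∈ R) (hp1 : p1 ∉ R') (hlt : p1 < p2) (hsucc : ∀ w, p1 < w → p2 ≤ w)
    (hxor : Xor (p1 ∈ X) (p2 ∈ X)) : crossIn R' X + 1 ≤ crossIn R X := by
  apply Nat.succ_le_of_lt
  apply Finset.card_lt_card
  constructor
  · intro p hp
    rw [Finset.mem_filter] at hp ⊢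
    exact ⟨hp.1, h hp.2.1, hp.2.2⟩
  · intro hcon
    have hmem : (p1, p2) ∈ Finset.univ.filter (fun p : V × V =>
        p.1 ∈ R ∧ (p.1 < p.2 ∧ ∀ w : V, p.1 < w → p.2 ≤ w) ∧ Xor (p.1 ∈ X) (p.2 ∈ X)) := by
      rw [Finset.mem_filter]
      exact ⟨Finset.mem_univ _, hp1R, ⟨hlt, hsucc⟩, hxor⟩
    have := hcon hmem
    rw [Finset.mem_filter] at this
    exact hp1 this.2.1

/-- In a convex set containing a point of `X` and one outside `X`, there is a
crossing pair with left end inside the set. -/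
lemma exists_cross_pair (X I : Finset V)
    (hconv : ∀ x ∈ I, ∀ z ∈ I, ∀ y, x ≤ y → y ≤ z → y ∈ I)
    {a b : V} (ha : a ∈ I) (hb : b ∈ I) (haX : a ∈ X) (hbX : b ∉ X) :
    ∃ p1 p2 : V, p1 ∈ I ∧ p1 < p2 ∧ (∀ w, p1 < w → p2 ≤ w) ∧
      Xor (p1 ∈ X) (p2 ∈ X) := by
  classical
  rcases lt_trichotomy a b with hab | hab | hab
  · -- a < b
    have hTne : (I.filter (fun y => a ≤ y ∧ y ≤ b ∧ y ∈ X)).Nonempty :=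
      ⟨a, Finset.mem_filter.mpr ⟨ha, le_refl a, le_of_lt hab, haX⟩⟩
    obtain ⟨huI, hau, hub, huX⟩ :=
      Finset.mem_filter.mp (Finset.max'_mem _ hTne)
    set u := (I.filter (fun y => a ≤ y ∧ y ≤ b ∧ y ∈ X)).max' hTne with hu
    have hub' : u < b := lt_of_le_of_ne hub (fun h => hbX (by rw [← h]; exact huX))
    have hSne : (Finset.univ.filter (fun w => u < w)).Nonempty :=
      ⟨b, Finset.mem_filter.mpr ⟨Finset.mem_univ _, hub'⟩⟩
    set u' := (Finset.univ.filter (fun w => u < w)).min' hSne with hu'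
    have huu' : u < u' := (Finset.mem_filter.mp (Finset.min'_mem _ hSne)).2
    have hsucc : ∀ w, u < w → u' ≤ w := fun w hw =>
      Finset.min'_le _ _ (Finset.mem_filter.mpr ⟨Finset.mem_univ _, hw⟩)
    have hu'b : u' ≤ b := hsucc b hub'
    have hu'I : u' ∈ I := hconv u huI b hb u' (le_of_lt huu') hu'b
    have hu'X : u' ∉ X := by
      intro hx
      have hmem : u' ∈ I.filter (fun y => a ≤ y ∧ y ≤ b ∧ y ∈ X) :=
        Finset.mem_filter.mpr ⟨hu'I, le_trans hau (le_of_lt huu'), hu'b, hx⟩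
      exact absurd (Finset.le_max' _ u' hmem) (not_le.mpr huu')
    exact ⟨u, u', huI, huu', hsucc, Or.inl ⟨huX, hu'X⟩⟩
  · exact absurd (by rw [← hab]; exact haX) hbX
  · -- b < a
    have hTne : (I.filter (fun y => b ≤ y ∧ y ≤ a ∧ y ∉ X)).Nonempty :=
      ⟨b, Finset.mem_filter.mpr ⟨hb, le_refl b, le_of_lt hab, hbX⟩⟩
    obtain ⟨huI, hbu, hua, huX⟩ :=
      Finset.mem_filter.mp (Finset.max'_mem _ hTne)
    set u := (I.filter (fun y => b ≤ y ∧ y ≤ a ∧ y ∉ X)).max' hTne with hu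
    have hua' : u < a := lt_of_le_of_ne hua (fun h => huX (by rw [h]; exact haX))
    have hSne : (Finset.univ.filter (fun w => u < w)).Nonempty :=
      ⟨a, Finset.mem_filter.mpr ⟨Finset.mem_univ _, hua'⟩⟩
    set u' := (Finset.univ.filter (fun w => u < w)).min' hSne with hu'
    have huu' : u < u' := (Finset.mem_filter.mp (Finset.min'_mem _ hSne)).2
    have hsucc : ∀ w, u < w → u' ≤ w := fun w hw =>
      Finset.min'_le _ _ (Finset.mem_filter.mpr ⟨Finset.mem_univ _, hw⟩)
    have hu'a : u' ≤ a := hsucc a hua'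
    have hu'I : u' ∈ I := hconv u huI a ha u' (le_of_lt huu') hu'a
    have hu'X : u' ∈ X := by
      by_contra hx
      have hmem : u' ∈ I.filter (fun y => b ≤ y ∧ y ≤ a ∧ y ∉ X) :=
        Finset.mem_filter.mpr ⟨hu'I, le_trans hbu (le_of_lt huu'), hu'a, hx⟩
      exact absurd (Finset.le_max' _ u' hmem) (not_le.mpr huu')
    exact ⟨u, u', huI, huu', hsucc, Or.inr ⟨hu'X, huX⟩⟩

lemma greedyAux_empty (G : SimpleGraph V) [DecidableRel G.Adj] (fuel : ℕ) :
    greedyAux G fuel ∅ = [] := by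
  cases fuel <;> simp [greedyAux]

/-- Main induction. -/
lemma greedy_main (G : SimpleGraph V) [DecidableRel G.Adj] :
    ∀ (fuel : ℕ) (R : Finset V), R.card ≤ fuel → (∀ x ∈ R, ∀ y, x ≤ y → y ∈ R) →
    (∀ x ∈ R, ∃ I ∈ greedyAux G fuel R, x ∈ I) ∧
    (∀ I ∈ greedyAux G fuel R, ∃ u, I ⊆ cnbhd G u) ∧
    (∀ v : V, (greedyAux G fuel R).countP
        (fun I => decide ((I ∩ cnbhd G v).Nonempty)) ≤ crossIn R (cnbhd G v) + 1) := by
  intro fuel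
  induction fuel with
  | zero =>
    intro R hcard _
    have hRe : R = ∅ := Finset.card_eq_zero.mp (Nat.le_zero.mp hcard)
    subst hRe
    refine ⟨?_, ?_, ?_⟩
    · intro x hx; exact absurd hx (Finset.notMem_empty x)
    · intro I hI
      rw [show greedyAux G 0 (∅ : Finset V) = [] from rfl] at hI
      simp at hI
    · intro v
      rw [show greedyAux G 0 (∅ : Finset V) = [] from rfl, List.countP_nil]
      omega
  | succ fuel ih =>
    intro R hcard hup
    by_cases hRe : R = ∅
    · subst hRe
      refine ⟨?_, ?_, ?_⟩
      · intro x hx; exact absurd hx (Finset.notMem_empty x)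
      · intro I hI; rw [greedyAux_empty] at hI; simp at hI
      · intro v; rw [greedyAux_empty, List.countP_nil]; omega
    · have hR : R.Nonempty := Finset.nonempty_iff_ne_empty.mpr hRe
      obtain ⟨hsub, hIne, hcompact, hprefix, hmax⟩ := lcp_facts G R hR
      set I := lcp G R with hIdef
      set R' := R \ I with hR'def
      have hunfold : greedyAux G (fuel + 1) R = I :: greedyAux G fuel R' := by
        simp [greedyAux, hRe]
        exact ⟨rfl, rfl⟩
      have hR'sub : R' ⊆ R := Finset.sdiff_subset
      have hR'card : R'.card ≤ fuel := by
        have h1 : R'.card < R.card := by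
          rw [hR'def]
          exact Finset.card_lt_card (Finset.sdiff_ssubset hsub hIne)
        omega
      have hR'up : ∀ x ∈ R', ∀ y, x ≤ y → y ∈ R' := by
        intro x hx y hxy
        rw [Finset.mem_sdiff] at hx ⊢
        have hyR : y ∈ R := hup x hx.1 y hxy
        refine ⟨hyR, ?_⟩
        intro hyI
        have := hprefix y hyI x hx.1 hx.2
        exact absurd hxy (not_le.mpr this)
      obtain ⟨ihcov, ihcomp, ihcount⟩ := ih R' hR'card hR'up
      have hIdisj : ∀ x ∈ I, x ∉ R' := by
        intro x hx hx'
        rw [hR'def, Finset.mem_sdiff] at hx'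
        exact hx'.2 hx
      have hconv : ∀ x ∈ I, ∀ z ∈ I, ∀ y, x ≤ y → y ≤ z → y ∈ I := by
        intro x hx z hz y hxy hyz
        have hyR : y ∈ R := hup x (hsub hx) y hxy
        by_contra hyI
        exact absurd hyz (not_le.mpr (hprefix z hz y hyR hyI))
      refine ⟨?_, ?_, ?_⟩
      · intro x hx
        by_cases hxI : x ∈ I
        · exact ⟨I, by rw [hunfold]; exact List.mem_cons_self, hxI⟩
        · have hx' : x ∈ R' := Finset.mem_sdiff.mpr ⟨hx, hxI⟩
          obtain ⟨J, hJ, hxJ⟩ := ihcov x hx'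
          exact ⟨J, by rw [hunfold]; exact List.mem_cons_of_mem _ hJ, hxJ⟩
      · intro J hJ
        rw [hunfold] at hJ
        rcases List.mem_cons.mp hJ with h | h
        · rw [h]; exact hcompact
        · exact ihcomp J h
      · intro v
        rw [hunfold, List.countP_cons]
        by_cases hIX : (I ∩ (cnbhd G v)).Nonempty
        · rw [if_pos (by simpa using hIX)]
          rcases Finset.eq_empty_or_nonempty R' with hR'e | hR'ne
          · rw [hR'e, greedyAux_empty, List.countP_nil]
            omega
          · have key : crossIn R' (cnbhd G v) + 1 ≤ crossIn R (cnbhd G v) := by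
              obtain ⟨w, hw⟩ := hIX
              rw [Finset.mem_inter] at hw
              by_cases hImix : ∃ b ∈ I, b ∉ (cnbhd G v)
              · obtain ⟨b, hbI, hbX⟩ := hImix
                obtain ⟨p1, p2, hp1I, hlt, hsucc, hxor⟩ :=
                  exists_cross_pair (cnbhd G v) I hconv hw.1 hbI hw.2 hbX
                exact crossIn_lt hR'sub (cnbhd G v) (hsub hp1I) (hIdisj p1 hp1I) hlt hsucc hxor
              · push_neg at hImix
                have hxX : R'.min' hR'ne ∉ (cnbhd G v) := by
                  intro hxX
                  apply hmax hR'ne v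
                  intro y hy
                  rcases Finset.mem_insert.mp hy with h | h
                  · rw [h]; exact hxX
                  · exact hImix y h
                have hp1I : I.max' hIne ∈ I := Finset.max'_mem _ _
                have hxR' : R'.min' hR'ne ∈ R' := Finset.min'_mem _ _
                have hxR'' : R'.min' hR'ne ∈ R ∧ R'.min' hR'ne ∉ I :=
                  Finset.mem_sdiff.mp hxR'
                have hlt : I.max' hIne < R'.min' hR'ne :=
                  hprefix _ hp1I _ hxR''.1 hxR''.2
                have hsucc : ∀ w', I.max' hIne < w' → R'.min' hR'ne ≤ w' := by
                  intro w' hw'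
                  have hw'R : w' ∈ R := hup _ (hsub hp1I) w' (le_of_lt hw')
                  by_cases hw'I : w' ∈ I
                  · exact absurd (Finset.le_max' I w' hw'I) (not_le.mpr hw')
                  · exact Finset.min'_le _ _ (Finset.mem_sdiff.mpr ⟨hw'R, hw'I⟩)
                exact crossIn_lt hR'sub (cnbhd G v) (hsub hp1I) (hIdisj _ hp1I) hlt hsucc
                  (Or.inl ⟨hImix _ hp1I, hxX⟩)
            have := ihcount v
            omega
        · rw [if_neg (by simpa using hIX)]
          have h1 := ihcount v
          have h2 := crossIn_mono hR'sub (cnbhd G v)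
          omega

/-- if the closed neighborhoods of a graph `G` form a set system with
respect to which the linear order on `V` has crossing number `k`, then the greedy
partition of `V` into maximal compact prefix intervals yields a distance-1
neighborhood cover of `G` with weak diameter at most `4` and overlap at most `k + 1`. -/
theorem stmt_6 (G : SimpleGraph V) [DecidableRel G.Adj] (k : ℕ)
    (hcross : Finset.univ.sup (fun v => crossNum (cnbhd G v)) = k) :
    (∀ u : V, ∃ C ∈ greedyCover G, cnbhd G u ⊆ C) ∧
    (∀ C ∈ greedyCover G, ∀ u ∈ C, ∀ v ∈ C, G.Reachable u v ∧ G.dist u v ≤ 4) ∧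
    (∀ v : V, ((greedyCover G).countP (fun C => decide (v ∈ C))) ≤ k + 1) := by
  classical
  obtain ⟨hcov, hcomp, hcount⟩ := greedy_main G (Fintype.card V) Finset.univ
    (by rw [Finset.card_univ]) (fun x _ y _ => Finset.mem_univ y)
  have walk1 : ∀ {a b : V}, b ∈ cnbhd G a → ∃ p : G.Walk a b, p.length ≤ 1 := by
    intro a b hb
    rcases Finset.mem_insert.mp hb with h | h
    · subst h; exact ⟨SimpleGraph.Walk.nil, by simp⟩
    · exact ⟨((SimpleGraph.mem_neighborFinset _ _ _).mp h).toWalk,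
        by simp [SimpleGraph.Adj.toWalk]⟩
  refine ⟨?_, ?_, ?_⟩
  · intro u
    obtain ⟨I, hI, huI⟩ := hcov u (Finset.mem_univ u)
    exact ⟨I.biUnion (cnbhd G), List.mem_map_of_mem hI,
      Finset.subset_biUnion_of_mem (cnbhd G) huI⟩
  · intro C hC u hu v hv
    obtain ⟨I, hI, rfl⟩ := List.mem_map.mp hC
    obtain ⟨z, hz⟩ := hcomp I hI
    obtain ⟨wu, hwuI, hwu⟩ := Finset.mem_biUnion.mp hu
    obtain ⟨wv, hwvI, hwv⟩ := Finset.mem_biUnion.mp hv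
    obtain ⟨p1, hp1⟩ := walk1 (hz hwuI)
    obtain ⟨p2, hp2⟩ := walk1 hwu
    obtain ⟨q1, hq1⟩ := walk1 (hz hwvI)
    obtain ⟨q2, hq2⟩ := walk1 hwv
    have hlen : (((p1.append p2).reverse).append (q1.append q2)).length ≤ 4 := by
      rw [SimpleGraph.Walk.length_append, SimpleGraph.Walk.length_reverse,
        SimpleGraph.Walk.length_append, SimpleGraph.Walk.length_append]
      omega
    exact ⟨⟨((p1.append p2).reverse).append (q1.append q2)⟩,
      le_trans (SimpleGraph.dist_le _) hlen⟩
  · intro v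
    unfold greedyCover
    rw [List.countP_map]
    have heq : (greedyAux G (Fintype.card V) Finset.univ).countP
        ((fun C => decide (v ∈ C)) ∘ (fun I => I.biUnion (cnbhd G))) =
        (greedyAux G (Fintype.card V) Finset.univ).countP
        (fun I => decide ((I ∩ cnbhd G v).Nonempty)) := by
      apply List.countP_congr
      intro I _
      simp only [Function.comp_apply, decide_eq_true_eq]
      constructor
      · intro h
        obtain ⟨w, hwI, hvw⟩ := Finset.mem_biUnion.mp h
        exact ⟨w, Finset.mem_inter.mpr ⟨hwI, (mem_cnbhd_comm G).mp hvw⟩⟩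
      · rintro ⟨w, hw⟩
        rw [Finset.mem_inter] at hw
        exact Finset.mem_biUnion.mpr ⟨w, hw.1, (mem_cnbhd_comm G).mpr hw.2⟩
    rw [heq]
    have h1 := hcount v
    rw [crossIn_univ] at h1
    have h2 : crossNum (cnbhd G v) ≤ k := by
      rw [← hcross]
      exact Finset.le_sup (f := fun v => crossNum (cnbhd G v)) (Finset.mem_univ v)
    omega
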